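/- Let P ⊂ ℝⁿ be a compact convex polytope with nonempty interior containing the origin, and let θ be its extremal affine function. If max_{x∈P} θ(x) ≤ 1, then I_θ(f) ≥ 0 for every continuous convex function f : P → ℝ. -/

import Mathlib

open MeasureTheory

/-- `P ⊆ ℝⁿ` is a (compact convex) polytope: the convex hull of finitely many points. -/
def IsPolytope {n : ℕ} (P : Set (Fin n → ℝ)) : Prop :=
  ∃ V : Finset (Fin n → ℝ), P = convexHull ℝ (V : Set (Fin n → ℝ))

/-- `θ : ℝⁿ → ℝ` is an affine function. -/
def IsAffineFn {n : ℕ} (θ : (Fin n → ℝ) → ℝ) : Prop :=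
  ∃ (a : Fin n → ℝ) (c : ℝ), ∀ x, θ x = (∑ i, a i * x i) + c

/-- `θ` is the extremal affine function of `P`: it is affine, `∫_P θ = 0`, and
`∫_P xᵢ θ = ∫_P xᵢ` for every `i`. -/
def IsExtremalAffine {n : ℕ} (P : Set (Fin n → ℝ)) (θ : (Fin n → ℝ) → ℝ) : Prop :=
  IsAffineFn θ ∧ (∫ x in P, θ x) = 0 ∧
    ∀ i : Fin n, (∫ x in P, x i * θ x) = ∫ x in P, x i

/-- The relative Ding invariant `I_θ(f) = -f(0) + (1/vol P) ∫_P f (1 - θ)`. -/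
noncomputable def DingI {n : ℕ} (P : Set (Fin n → ℝ)) (θ f : (Fin n → ℝ) → ℝ) : ℝ :=
  -f 0 + (1 / (volume P).toReal) * ∫ x in P, f x * (1 - θ x)

/-- If `max_P θ ≤ 1`, then `I_θ(f) ≥ 0` for every continuous convex function `f` on `P`. -/
theorem ding_invariant_nonneg {n : ℕ} (P : Set (Fin n → ℝ))
    (hP : IsPolytope P) (hint : (interior P).Nonempty) (h0 : (0 : Fin n → ℝ) ∈ P)
    (θ : (Fin n → ℝ) → ℝ) (hθ : IsExtremalAffine P θ)
    (hmax : ∀ x ∈ P, θ x ≤ 1)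
    (f : (Fin n → ℝ) → ℝ) (hfc : ContinuousOn f P) (hfconv : ConvexOn ℝ P f) :
    0 ≤ DingI P θ f := by
  obtain ⟨⟨a, c, hac⟩, hθ0, hθi⟩ := hθ
  -- basic facts about P
  obtain ⟨V, hV⟩ := hP
  have hPc : IsCompact P := by rw [hV]; exact V.finite_toSet.isCompact_convexHull ℝ
  have hPcl : IsClosed P := hPc.isClosed
  have hPm : MeasurableSet P := hPcl.measurableSet
  have hvol_lt : volume P < ⊤ := hPc.measure_lt_top
  have hvol_pos : 0 < volume P :=
    lt_of_lt_of_le (isOpen_interior.measure_pos volume hint) (measure_mono interior_subset)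
  have hV0 : 0 < (volume P).toReal := ENNReal.toReal_pos hvol_pos.ne' hvol_lt.ne
  -- continuity of θ
  have hθc : Continuous θ := by
    have : Continuous (fun x : Fin n → ℝ => (∑ i, a i * x i) + c) := by fun_prop
    simpa [← funext hac] using this
  -- the density
  set ρ : (Fin n → ℝ) → NNReal := fun x => (1 - θ x).toNNReal with hρ
  have hρc : Continuous fun x => (ρ x : ℝ) := by
    simpa [hρ, Real.coe_toNNReal'] using (continuous_const.sub hθc).max continuous_const
  have hρm : Measurable ρ := by
    exact (continuous_real_toNNReal.comp (continuous_const.sub hθc)).measurable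
  have hρP : ∀ x ∈ P, (ρ x : ℝ) = 1 - θ x := fun x hx =>
    Real.coe_toNNReal _ (by linarith [hmax x hx])
  set μ : Measure (Fin n → ℝ) :=
    (volume.restrict P).withDensity (fun x => (ρ x : ENNReal)) with hμ
  -- integrability lemmas on P
  have hint1 : IntegrableOn (fun x => 1 - θ x) P :=
    ((continuous_const.sub hθc).continuousOn).integrableOn_compact hPc
  -- total mass of μ
  have hμuniv : μ Set.univ = volume P := by
    have hcoe : (fun x => (ρ x : ENNReal)) = fun x => ENNReal.ofReal (1 - θ x) := by
      funext x; simp [hρ, ENNReal.ofReal]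
    have h1 : μ Set.univ = ∫⁻ x in P, ENNReal.ofReal (1 - θ x) := by
      rw [hμ, withDensity_apply _ MeasurableSet.univ, Measure.restrict_univ, hcoe]
    rw [h1, ← ofReal_integral_eq_lintegral_ofReal hint1
      ((ae_restrict_iff' hPm).2 (Filter.Eventually.of_forall fun x hx => by
          simp only [Pi.zero_apply]; linarith [hmax x hx]))]
    have : ∫ x in P, (1 - θ x) = (volume P).toReal := by
      rw [integral_sub (integrableOn_const (C := (1:ℝ)) hvol_lt.ne) (hθc.continuousOn.integrableOn_compact hPc), hθ0]
      simp [Measure.restrict_apply_univ, measureReal_def]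
    rw [this, ENNReal.ofReal_toReal hvol_lt.ne]
  have : IsFiniteMeasure μ := ⟨by rw [hμuniv]; exact hvol_lt⟩
  have : NeZero μ := ⟨fun h => by simp [h] at hμuniv; exact hvol_pos.ne' hμuniv.symm⟩
  -- a.e. membership in P
  have haeP : ∀ᵐ x ∂μ, x ∈ P :=
    (withDensity_absolutelyContinuous _ _).ae_le (ae_restrict_mem hPm)
  -- integrability wrt μ
  have hidi : Integrable (fun x : Fin n → ℝ => x) μ := by
    rw [hμ, integrable_withDensity_iff_integrable_smul hρm]
    exact (hρc.continuousOn.smul continuousOn_id).integrableOn_compact hPc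
  have hfi : Integrable f μ := by
    rw [hμ, integrable_withDensity_iff_integrable_smul hρm]
    exact (hρc.continuousOn.smul hfc).integrableOn_compact hPc
  -- integral identities
  have hI : ∀ g : (Fin n → ℝ) → ℝ, ∫ x, g x ∂μ = ∫ x in P, (1 - θ x) * g x := by
    intro g
    rw [hμ, integral_withDensity_eq_integral_smul hρm]
    refine setIntegral_congr_fun hPm fun x hx => ?_
    rw [NNReal.smul_def, hρP x hx, smul_eq_mul]
  -- barycenter is 0
  have hbary : (∫ x, (x : Fin n → ℝ) ∂μ) = 0 := by
    funext i
    have hL := (ContinuousLinearMap.proj (R := ℝ) (φ := fun _ : Fin n => ℝ) i).integral_comp_comm hidi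
    have h2 : ∫ x, (x : Fin n → ℝ) i ∂μ = 0 := by
      have : ∫ x, (fun y : Fin n → ℝ => y i) x ∂μ = ∫ x in P, (1 - θ x) * x i := hI _
      rw [this]
      have hxi : IntegrableOn (fun x : Fin n → ℝ => x i) P :=
        (continuous_apply i).continuousOn.integrableOn_compact hPc
      have hxθ : IntegrableOn (fun x : Fin n → ℝ => x i * θ x) P :=
        ((continuous_apply i).mul hθc).continuousOn.integrableOn_compact hPc
      have : ∫ x in P, (1 - θ x) * x i = (∫ x in P, x i) - ∫ x in P, x i * θ x := by
        rw [← integral_sub hxi hxθ]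
        refine setIntegral_congr_fun hPm fun x _ => by ring
      rw [this, hθi i, sub_self]
    calc (∫ x, (x : Fin n → ℝ) ∂μ) i
        = ∫ x, (x : Fin n → ℝ) i ∂μ := by
          simpa using hL.symm
      _ = 0 := h2
  -- Jensen
  have hjensen := hfconv.map_average_le hfc hPcl haeP hidi
    (by exact hfi)
  rw [average_eq, average_eq, hbary, measureReal_def, hμuniv] at hjensen
  simp only [smul_zero] at hjensen
  have hIf : ∫ x, f x ∂μ = ∫ x in P, f x * (1 - θ x) := by
    rw [hI f]; exact setIntegral_congr_fun hPm fun x _ => by ring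
  rw [hIf, smul_eq_mul] at hjensen
  have : f 0 ≤ (1 / (volume P).toReal) * ∫ x in P, f x * (1 - θ x) := by
    rw [one_div]; exact hjensen
  unfold DingI
  linarith
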